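/- Let F be a field, let u, v be (possibly countably infinite) index sets, and let B be a u × v matrix over F with finitely many nonzero entries per row. Then there exists a v × v matrix C over F with finitely many nonzero entries per row such that: (1) for every x ∈ F^v, B x = 0 if and only if C x = x; (2) B C = O; (3) the kernel of B equals the range of C (as maps on F^v); and (4) C² = C. -/

import Mathlib

open scoped BigOperators

open Function

namespace Stmt3Aux

variable {F : Type} [Field F] {v : Type}

noncomputable def piv (ι : v → ℕ) (w : v →₀ F) (h : w ≠ 0) : v :=
  (Finset.exists_max_image w.support ι (Finsupp.support_nonempty_iff.mpr h)).choose

lemma piv_mem (ι : v → ℕ) (w : v →₀ F) (h : w ≠ 0) : piv ι w h ∈ w.support :=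
  (Finset.exists_max_image w.support ι (Finsupp.support_nonempty_iff.mpr h)).choose_spec.1

lemma le_piv (ι : v → ℕ) (w : v →₀ F) (h : w ≠ 0) :
    ∀ k ∈ w.support, ι k ≤ ι (piv ι w h) :=
  (Finset.exists_max_image w.support ι (Finsupp.support_nonempty_iff.mpr h)).choose_spec.2

def IsPiv (ι : v → ℕ) (W : Submodule F (v →₀ F)) (s : v) : Prop :=
  ∃ w : v →₀ F, ∃ hw : w ∈ W ∧ w ≠ 0, piv ι w hw.2 = s

open Classical in
noncomputable def gFun (ι : v → ℕ) (W : Submodule F (v →₀ F)) : ℕ → (v →₀ F)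
  | n =>
    if h : ∃ w : v →₀ F, ∃ hw : w ∈ W ∧ w ≠ 0, ι (piv ι w hw.2) = n then
      let w := h.choose
      let hw := h.choose_spec.choose
      let s := piv ι w hw.2
      let w₁ := (w s)⁻¹ • w
      w₁ - ∑ j ∈ w₁.support.erase s,
        if hlt : ι j < n then w₁ j • gFun ι W (ι j) else 0
    else 0
  termination_by n => n
  decreasing_by exact hlt

lemma gFun_spec (ι : v → ℕ) (hι : Injective ι) (W : Submodule F (v →₀ F)) (n : ℕ) :
    gFun ι W n ∈ W ∧
    (∀ k, n < ι k → gFun ι W n k = 0) ∧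
    (∀ s, IsPiv ι W s → ι s = n → gFun ι W n s = 1) ∧
    (∀ t, IsPiv ι W t → ι t ≠ n → gFun ι W n t = 0) := by
  classical
  induction n using Nat.strong_induction_on with
  | _ n IH =>
  by_cases h : ∃ w : v →₀ F, ∃ hw : w ∈ W ∧ w ≠ 0, ι (piv ι w hw.2) = n
  case neg =>
    have hz : gFun ι W n = 0 := by rw [gFun, dif_neg h]
    refine ⟨by simp [hz], by simp [hz], ?_, by simp [hz]⟩
    intro s hs hsn
    exfalso; apply h
    obtain ⟨w, hw, hpw⟩ := hs
    exact ⟨w, hw, by rw [hpw, hsn]⟩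
  case pos =>
    set w : v →₀ F := h.choose with hw_def
    have hw : w ∈ W ∧ w ≠ 0 := h.choose_spec.choose
    have hιpiv : ι (piv ι w hw.2) = n := h.choose_spec.choose_spec
    set s : v := piv ι w hw.2 with hs_def
    set w₁ : v →₀ F := (w s)⁻¹ • w with hw1_def
    have hws : w s ≠ 0 := Finsupp.mem_support_iff.mp (piv_mem ι w hw.2)
    have hsupp1 : w₁.support = w.support := Finsupp.support_smul_eq (inv_ne_zero hws)
    have hw1s : w₁ s = 1 := by
      rw [hw1_def, Finsupp.smul_apply, smul_eq_mul, inv_mul_cancel₀ hws]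
    have hlt' : ∀ j ∈ w₁.support.erase s, ι j < n := by
      intro j hj
      rcases Finset.mem_erase.mp hj with ⟨hjs, hjsupp⟩
      have := le_piv ι w hw.2 j (hsupp1 ▸ hjsupp)
      rw [hιpiv] at this
      exact lt_of_le_of_ne this (fun hh => hjs (hι (hh.trans hιpiv.symm)))
    have heq : gFun ι W n = w₁ - ∑ j ∈ w₁.support.erase s, w₁ j • gFun ι W (ι j) := by
      rw [gFun, dif_pos h]
      simp only
      congr 1
      refine Finset.sum_congr rfl (fun j hj => ?_)
      rw [dif_pos (hlt' j hj)]
    have happ : ∀ k, gFun ι W n k =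
        w₁ k - ∑ j ∈ w₁.support.erase s, w₁ j * gFun ι W (ι j) k := by
      intro k
      rw [heq, Finsupp.sub_apply, Finsupp.finset_sum_apply]
      simp only [Finsupp.smul_apply, smul_eq_mul]
    have part1 : gFun ι W n ∈ W := by
      rw [heq]
      exact sub_mem (Submodule.smul_mem _ _ hw.1)
        (Submodule.sum_mem _ fun j hj => Submodule.smul_mem _ _ (IH (ι j) (hlt' j hj)).1)
    have part2 : ∀ k, n < ι k → gFun ι W n k = 0 := by
      intro k hk
      rw [happ]
      have h1 : w₁ k = 0 := by
        apply Finsupp.notMem_support_iff.mp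
        intro hk'
        have := le_piv ι w hw.2 k (hsupp1 ▸ hk')
        rw [hιpiv] at this; omega
      rw [h1, Finset.sum_eq_zero, sub_zero]
      intro j hj
      rw [(IH (ι j) (hlt' j hj)).2.1 k (lt_trans (hlt' j hj) hk), mul_zero]
    have part3 : ∀ s', IsPiv ι W s' → ι s' = n → gFun ι W n s' = 1 := by
      intro s' hs' hs'n
      have hss' : s' = s := hι (by rw [hs'n, hιpiv])
      subst hss'
      rw [happ, hw1s, Finset.sum_eq_zero, sub_zero]
      intro j hj
      rw [(IH (ι j) (hlt' j hj)).2.1 s (hιpiv ▸ hlt' j hj), mul_zero]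
    refine ⟨part1, part2, part3, ?_⟩
    intro t ht htn
    rcases lt_or_gt_of_ne htn with hcase | hcase
    · -- ι t < n
      have hts : t ≠ s := fun hh => htn (hh ▸ hιpiv ▸ rfl : ι t = n)
      have hterm : ∀ j ∈ w₁.support.erase s, j ≠ t → w₁ j * gFun ι W (ι j) t = 0 := by
        intro j hj hjt
        rw [(IH (ι j) (hlt' j hj)).2.2.2 t ht (fun hh => hjt (hι hh).symm), mul_zero]
      rw [happ]
      by_cases hmem : t ∈ w₁.support.erase s
      · rw [Finset.sum_eq_single_of_mem t hmem hterm,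
          (IH (ι t) hcase).2.2.1 t ht rfl, mul_one, sub_self]
      · have h1 : w₁ t = 0 := by
          apply Finsupp.notMem_support_iff.mp
          intro hk'
          exact hmem (Finset.mem_erase.mpr ⟨hts, hk'⟩)
        rw [h1, Finset.sum_eq_zero, sub_zero]
        intro j hj
        exact hterm j hj (fun hh => hmem (hh ▸ hj))
    · exact part2 t hcase

lemma gFun_not_piv (ι : v → ℕ) (hι : Injective ι) (W : Submodule F (v →₀ F)) (j : v)
    (h : ¬ IsPiv ι W j) : gFun ι W (ι j) = 0 := by
  rw [gFun, dif_neg]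
  rintro ⟨w, hw, hpw⟩
  exact h ⟨w, hw, hι hpw⟩

lemma gFun_repr (ι : v → ℕ) (hι : Injective ι) (W : Submodule F (v →₀ F))
    (b : v →₀ F) (hb : b ∈ W) :
    b = ∑ j ∈ b.support, b j • gFun ι W (ι j) := by
  classical
  set r := b - ∑ j ∈ b.support, b j • gFun ι W (ι j) with hr
  have hrW : r ∈ W := sub_mem hb (Submodule.sum_mem _ fun j _ =>
    Submodule.smul_mem _ _ (gFun_spec ι hι W (ι j)).1)
  have hrS : ∀ t, IsPiv ι W t → r t = 0 := by
    intro t ht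
    have happ : r t = b t - ∑ j ∈ b.support, b j * gFun ι W (ι j) t := by
      rw [hr, Finsupp.sub_apply, Finsupp.finset_sum_apply]
      simp only [Finsupp.smul_apply, smul_eq_mul]
    have hterm : ∀ j ∈ b.support, j ≠ t → b j * gFun ι W (ι j) t = 0 := by
      intro j hj hjt
      by_cases hPj : IsPiv ι W j
      · rw [(gFun_spec ι hι W (ι j)).2.2.2 t ht (fun hh => hjt (hι hh).symm), mul_zero]
      · rw [gFun_not_piv ι hι W j hPj]; simp
    by_cases hmem : t ∈ b.support
    · rw [happ, Finset.sum_eq_single_of_mem t hmem hterm,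
        (gFun_spec ι hι W (ι t)).2.2.1 t ht rfl, mul_one, sub_self]
    · rw [happ, Finset.sum_eq_zero (fun j hj => hterm j hj (fun hh => hmem (hh ▸ hj))),
        Finsupp.notMem_support_iff.mp hmem, sub_zero]
  have hr0 : r = 0 := by
    by_contra hr0
    have hp : IsPiv ι W (piv ι r hr0) := ⟨r, ⟨hrW, hr0⟩, rfl⟩
    exact Finsupp.mem_support_iff.mp (piv_mem ι r hr0) (hrS _ hp)
  exact sub_eq_zero.mp hr0

end Stmt3Aux

/-- Matrix–vector product over a field, via `finsum`. -/
noncomputable def fMulVec {u v F : Type} [Field F] (A : u → v → F) (x : v → F) : u → F :=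
  fun i => ∑ᶠ j, A i j * x j

/-- for any `u × v` matrix `B` over a field `F` (with `u, v` at most
countable and finitely many nonzero entries in each row of `B`) there is a `v × v`
matrix `C` (finitely many nonzero entries per row) with: (1) `B x = 0 ↔ C x = x`;
(2) `B C = O`; (3) `K(B) = R(C)`; (4) `C² = C`. -/
theorem stmt3 {F : Type} [Field F] {u v : Type} [Countable u] [Countable v]
    (B : u → v → F) (hB : ∀ i, (Function.support (B i)).Finite) :
    ∃ C : v → v → F,
      (∀ i, (Function.support (C i)).Finite) ∧
      (∀ x : v → F, (∀ i, fMulVec B x i = 0) ↔ (∀ i, fMulVec C x i = x i)) ∧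
      (∀ i k, (∑ᶠ j, B i j * C j k) = 0) ∧
      ({x : v → F | ∀ i, fMulVec B x i = 0} =
        {w : v → F | ∃ y : v → F, w = fMulVec C y}) ∧
      (∀ i k, (∑ᶠ j, C i j * C j k) = C i k) := by
  classical
  obtain ⟨ι, hι⟩ := (countable_iff_exists_injective v).mp inferInstance
  set bf : u → (v →₀ F) := fun i => Finsupp.ofSupportFinite (B i) (hB i) with hbf_def
  have hbf : ∀ i j, bf i j = B i j := fun i j => rfl
  set W : Submodule F (v →₀ F) := Submodule.span F (Set.range bf) with hW_def
  set g : v → (v →₀ F) := fun j => Stmt3Aux.gFun ι W (ι j) with hg_def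
  have hgW : ∀ j, g j ∈ W := fun j => (Stmt3Aux.gFun_spec ι hι W (ι j)).1
  set T : (v → F) → (v →₀ F) →ₗ[F] F := fun x => Finsupp.linearCombination F x with hT_def
  have hTsum : ∀ (x : v → F) (w : v →₀ F), T x w = ∑ j ∈ w.support, w j * x j := by
    intro x w
    rw [hT_def]
    rw [Finsupp.linearCombination_apply, Finsupp.sum]
    simp [smul_eq_mul]
  have hfinsum : ∀ (x : v → F) (w : v →₀ F), (∑ᶠ j, w j * x j) = T x w := by
    intro x w
    rw [hTsum]
    exact finsum_eq_finset_sum_of_support_subset _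
      (fun j hj => Finsupp.mem_support_iff.mpr (fun h0 => hj (by simp [Function.mem_support, h0])))
  -- pointwise representation
  have hR : ∀ b ∈ W, ∀ k, b k = ∑ j ∈ b.support, b j * g j k := by
    intro b hb k
    have hrepr := Stmt3Aux.gFun_repr ι hι W b hb
    nth_rewrite 1 [hrepr]
    rw [Finsupp.finset_sum_apply]
    simp [Finsupp.smul_apply, smul_eq_mul]
    rfl
  -- representation under T
  have hRt : ∀ b ∈ W, ∀ x : v → F, T x b = ∑ j ∈ b.support, b j * T x (g j) := by
    intro b hb x
    have hrepr := Stmt3Aux.gFun_repr ι hι W b hb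
    nth_rewrite 1 [hrepr]
    rw [map_sum]
    simp [map_smul, smul_eq_mul]
    rfl
  have hker : ∀ x : v → F, (∀ i, T x (bf i) = 0) → ∀ w ∈ W, T x w = 0 := by
    intro x hx w hw
    have hle : W ≤ LinearMap.ker (T x) := by
      rw [hW_def]
      refine Submodule.span_le.mpr ?_
      rintro _ ⟨i, rfl⟩
      exact LinearMap.mem_ker.mpr (hx i)
    exact hle hw
  -- the matrix C
  set C : v → v → F := fun i k => (if i = k then (1:F) else 0) - g i k with hC_def
  have hCrow : ∀ i, Function.support (C i) ⊆ ↑(insert i (g i).support) := by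
    intro i k hk
    simp only [Finset.coe_insert, Set.mem_insert_iff, Finset.mem_coe, Finsupp.mem_support_iff]
    by_contra hcon
    push_neg at hcon
    apply hk
    rw [hC_def]
    simp only [hcon.2, sub_zero]
    rw [if_neg (fun hh => hcon.1 hh.symm)]
  have hCfin : ∀ i, (Function.support (C i)).Finite :=
    fun i => Set.Finite.subset (Finset.finite_toSet _) (hCrow i)
  -- fMulVec through T
  have hFB : ∀ (x : v → F) (i : u), fMulVec B x i = T x (bf i) := by
    intro x i
    rw [fMulVec, ← hfinsum]
    exact finsum_congr fun j => by rw [hbf]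
  have hFC : ∀ (x : v → F) (i : v), fMulVec C x i = x i - T x (g i) := by
    intro x i
    rw [fMulVec]
    have hsub : Function.support (fun k => C i k * x k) ⊆ ↑(insert i (g i).support) :=
      fun k hk => hCrow i (fun h0 => hk (by simp [Function.mem_support, h0]))
    rw [finsum_eq_finset_sum_of_support_subset _ hsub]
    have hsplit : ∀ k, C i k * x k = (if i = k then 1 else 0) * x k - g i k * x k := by
      intro k; rw [hC_def]; ring
    rw [Finset.sum_congr rfl (fun k _ => hsplit k), Finset.sum_sub_distrib]
    congr 1
    · simp only [ite_mul, one_mul, zero_mul]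
      rw [Finset.sum_ite_eq]
      rw [if_pos (Finset.mem_insert_self i _)]
    · rw [hTsum]
      refine (Finset.sum_subset (Finset.subset_insert i _) ?_).symm
      intro k _ hk
      rw [Finsupp.notMem_support_iff.mp hk, zero_mul]
  -- Goal 1
  have goal1 : ∀ x : v → F, (∀ i, fMulVec B x i = 0) ↔ (∀ i, fMulVec C x i = x i) := by
    intro x
    constructor
    · intro hx i
      have hW0 : ∀ w ∈ W, T x w = 0 := hker x (fun i => by rw [← hFB]; exact hx i)
      rw [hFC, hW0 (g i) (hgW i), sub_zero]
    · intro hx i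
      have hg0 : ∀ j, T x (g j) = 0 := by
        intro j
        have := hx j
        rw [hFC] at this
        have := sub_eq_self.mp this
        exact this
      rw [hFB, hRt (bf i) (Submodule.subset_span ⟨i, rfl⟩) x, Finset.sum_eq_zero]
      intro j _
      rw [hg0 j, mul_zero]
  -- Goal 2
  have goal2 : ∀ (i : u) (k : v), (∑ᶠ j, B i j * C j k) = 0 := by
    intro i k
    have hsub : Function.support (fun j => B i j * C j k) ⊆ ↑(bf i).support := by
      intro j hj
      rw [Function.mem_support] at hj
      rw [Finset.mem_coe, Finsupp.mem_support_iff, hbf]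
      intro h0; exact hj (by rw [h0, zero_mul])
    rw [finsum_eq_finset_sum_of_support_subset _ hsub]
    have hsplit : ∀ j, B i j * C j k = (if j = k then 1 else 0) * B i j - bf i j * g j k := by
      intro j; rw [hC_def, hbf]; ring
    rw [Finset.sum_congr rfl (fun j _ => hsplit j), Finset.sum_sub_distrib]
    rw [← hR (bf i) (Submodule.subset_span ⟨i, rfl⟩) k]
    simp only [ite_mul, one_mul, zero_mul]
    rw [Finset.sum_ite_eq']
    by_cases hk : k ∈ (bf i).support
    · rw [if_pos hk, hbf, sub_self]
    · rw [if_neg hk, Finsupp.notMem_support_iff.mp hk, sub_zero]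
  -- Goal 4
  have goal4 : ∀ (i k : v), (∑ᶠ j, C i j * C j k) = C i k := by
    intro i k
    have hsub : Function.support (fun j => C i j * C j k) ⊆ ↑(insert i (g i).support) :=
      fun j hj => hCrow i (fun h0 => hj (by simp [Function.mem_support, h0]))
    rw [finsum_eq_finset_sum_of_support_subset _ hsub]
    have hsplit : ∀ j, C i j * C j k = (if i = j then 1 else 0) * C j k - g i j * C j k := by
      intro j; rw [hC_def]; ring
    rw [Finset.sum_congr rfl (fun j _ => hsplit j), Finset.sum_sub_distrib]
    have h1 : ∑ j ∈ insert i (g i).support, (if i = j then 1 else 0) * C j k = C i k := by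
      simp only [ite_mul, one_mul, zero_mul]
      rw [Finset.sum_ite_eq, if_pos (Finset.mem_insert_self i _)]
    have h2 : ∑ j ∈ insert i (g i).support, g i j * C j k = 0 := by
      have hsmaller : ∑ j ∈ insert i (g i).support, g i j * C j k
          = ∑ j ∈ (g i).support, g i j * C j k := by
        refine (Finset.sum_subset (Finset.subset_insert i _) ?_).symm
        intro j _ hj
        rw [Finsupp.notMem_support_iff.mp hj, zero_mul]
      rw [hsmaller]
      have hsplit2 : ∀ j, g i j * C j k = (if j = k then 1 else 0) * g i j - g i j * g j k := by
        intro j; rw [hC_def]; ring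
      rw [Finset.sum_congr rfl (fun j _ => hsplit2 j), Finset.sum_sub_distrib]
      rw [← hR (g i) (hgW i) k]
      simp only [ite_mul, one_mul, zero_mul]
      rw [Finset.sum_ite_eq']
      by_cases hk : k ∈ (g i).support
      · rw [if_pos hk, sub_self]
      · rw [if_neg hk, Finsupp.notMem_support_iff.mp hk, sub_zero]
    rw [h1, h2, sub_zero]
  -- Goal 3
  have goal3 : {x : v → F | ∀ i, fMulVec B x i = 0} =
      {w : v → F | ∃ y : v → F, w = fMulVec C y} := by
    ext x
    simp only [Set.mem_setOf_eq]
    constructor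
    · intro hx
      exact ⟨x, funext fun i => ((goal1 x).mp hx i).symm⟩
    · rintro ⟨y, rfl⟩
      refine (goal1 _).mpr ?_
      intro i
      rw [hFC]
      have hzero : T (fMulVec C y) (g i) = 0 := by
        rw [hTsum]
        have : ∀ j, fMulVec C y j = y j - T y (g j) := fun j => hFC y j
        calc ∑ j ∈ (g i).support, g i j * fMulVec C y j
            = ∑ j ∈ (g i).support, (g i j * y j - g i j * T y (g j)) := by
              refine Finset.sum_congr rfl (fun j _ => ?_)
              rw [this j]; ring
          _ = ∑ j ∈ (g i).support, g i j * y j - ∑ j ∈ (g i).support, g i j * T y (g j) :=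
              Finset.sum_sub_distrib _ _
          _ = T y (g i) - T y (g i) := by rw [← hTsum, ← hRt (g i) (hgW i) y]
          _ = 0 := sub_self _
      rw [hzero, sub_zero]
  exact ⟨C, hCfin, goal1, goal2, goal3, goal4⟩
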